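/- For all s ∈ μ_r and v ∈ A_1: τ(v ⋄_s 1) = τ(v) ⋄_s 1, i.e., τ commutes with the map v ↦ v ⋄_s 1 on A_1. -/
import Mathlib


open FreeAlgebra

/-- Alphabet of `A_1 = ℚ⟨x,y⟩`. -/
inductive LetA : Type | x : LetA | y : LetA

/-- Alphabet of `A_r = ℚ⟨x, y_s : s ∈ μ_r⟩`; the group `G` plays the role of `μ_r`. -/
inductive LetR (G : Type) : Type | x : LetR G | y : G → LetR G

/-- `A_1 = ℚ⟨x, y⟩`. -/
abbrev A1 : Type := FreeAlgebra ℚ LetA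

/-- `A_r = ℚ⟨x, y_s : s ∈ μ_r⟩`. -/
abbrev Ar (G : Type) : Type := FreeAlgebra ℚ (LetR G)

noncomputable def X1 : A1 := ι ℚ LetA.x
noncomputable def Y1 : A1 := ι ℚ LetA.y

variable {G : Type} [CommGroup G]

noncomputable def Xr : Ar G := ι ℚ LetR.x
noncomputable def Yr (s : G) : Ar G := ι ℚ (LetR.y s)

/-- `z = x + y_1`. -/
noncomputable def zet : Ar G := Xr + Yr 1

open scoped Classical in
/-- `z_s^δ = x + δ(s) y_s` with `δ(1) = 0`, `δ(s) = 1` otherwise. -/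
noncomputable def zdel (s : G) : Ar G := if s = 1 then Xr else Xr + Yr s

/-- The involutive automorphism `φ` of `A_r`: `φ(x) = z`, `φ(y_s) = z_s^δ - z`. -/
noncomputable def phi : Ar G →ₐ[ℚ] Ar G :=
  lift ℚ (fun l => match l with
    | LetR.x => zet
    | LetR.y s => zdel s - zet)

/-- The natural embedding `A_1 → A_r`, `x ↦ x`, `y ↦ y_1`. -/
noncomputable def jm : A1 →ₐ[ℚ] Ar G :=
  lift ℚ (fun l => match l with
    | LetA.x => Xr
    | LetA.y => Yr 1)

open scoped Classical in
/-- The anti-automorphism `τ` of `A_r`: `τ(x) = y_1`, `τ(y_1) = x`, `τ(y_s) = -y_s` (`s ≠ 1`). -/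
noncomputable def tauR : Ar G →ₗ[ℚ] Ar G :=
  (MulOpposite.opLinearEquiv ℚ).symm.toLinearMap ∘ₗ
    (lift ℚ (fun l => match l with
      | LetR.x => MulOpposite.op (Yr 1)
      | LetR.y s => MulOpposite.op (if s = 1 then Xr else -(Yr s)) ) :
        Ar G →ₐ[ℚ] (Ar G)ᵐᵒᵖ).toLinearMap

/-- The anti-automorphism `τ` of `A_1`: `τ(x) = y`, `τ(y) = x`. -/
noncomputable def tau1 : A1 →ₗ[ℚ] A1 :=
  (MulOpposite.opLinearEquiv ℚ).symm.toLinearMap ∘ₗ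
    (lift ℚ (fun l => match l with
      | LetA.x => MulOpposite.op Y1
      | LetA.y => MulOpposite.op X1) : A1 →ₐ[ℚ] A1ᵐᵒᵖ).toLinearMap

/-- `wordP [(a₁,s₁),...,(a_l,s_l)] = x^{a₁} y_{s₁} ⋯ x^{a_l} y_{s_l}`,
i.e. the word `z_{a₁+1, s₁} ⋯ z_{a_l+1, s_l}`. -/
noncomputable def wordP (L : List (ℕ × G)) : Ar G :=
  (L.map (fun p => Xr ^ p.1 * Yr p.2)).prod

/-- Cumulative-product reindexing of subscripts: this realizes the composition `I ∘ M_s`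
on subscript lists, sending `(s₁, s₂, …, s_l)` to `(s s₁, s s₁ s₂, …, s s₁ ⋯ s_l)`. -/
def cumul : G → List (ℕ × G) → List (ℕ × G)
  | _, [] => []
  | g, p :: L => (p.1, g * p.2) :: cumul (g * p.2) L

/-- All the data entering the definition of the diamond products `⋄_s`:
the harmonic product `*`, the maps `ψ_s = φ ∘ I ∘ M_s`, and the family of
`ℚ`-bilinear diamond products `D s : A_1 × A_r → A_r` (together with the
corestriction `D1` of `⋄_1` to `A_1 × A_1 → A_1`), each characterized by its
defining recursive rules. -/
structure DiamondSetup (G : Type) [CommGroup G] where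
  /-- the harmonic product -/
  hst : Ar G →ₗ[ℚ] Ar G →ₗ[ℚ] Ar G
  one_hst : ∀ w, hst 1 w = w
  hst_one : ∀ v, hst v 1 = v
  hst_xr : ∀ v w, hst (v * Xr) w = hst v w * Xr
  hst_xl : ∀ v w, hst v (w * Xr) = hst v w * Xr
  hst_yy : ∀ (v w : Ar G) (s t : G), hst (v * Yr s) (w * Yr t) =
      hst v (w * Yr t) * Yr s + hst (v * Yr s) w * Yr t + hst v w * (Xr * Yr (s * t))
  /-- the linear automorphisms `ψ_s = φ ∘ I ∘ M_s` -/
  psi : G → (Ar G ≃ₗ[ℚ] Ar G)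
  psi_spec : ∀ (s : G) (L : List (ℕ × G)) (a : ℕ),
      psi s (wordP L * Xr ^ a) = phi (wordP (cumul s L) * Xr ^ a)
  /-- the diamond products `⋄_s : A_1 × A_r → A_r` -/
  D : G → A1 →ₗ[ℚ] Ar G →ₗ[ℚ] Ar G
  one_D : ∀ (s : G) (w : Ar G), D s 1 w = w
  D_one : ∀ (s : G) (v : A1), D s v 1 = psi s (phi (jm v))
  Dxx : ∀ (s : G) (v : A1) (w : Ar G), D s (v * X1) (w * Xr) =
      D s v (w * Xr) * Xr - D s (v * Y1) w * Xr
  Dyx : ∀ (s : G) (v : A1) (w : Ar G), D s (v * Y1) (w * Xr) =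
      D s v (w * Xr) * Yr 1 + D s (v * Y1) w * Xr
  Dxy : ∀ (s : G) (v : A1) (w : Ar G), D s (v * X1) (w * Yr 1) =
      D s v (w * Yr 1) * Xr + D s (v * X1) w * Yr 1
  Dyy : ∀ (s : G) (v : A1) (w : Ar G), D s (v * Y1) (w * Yr 1) =
      D s v (w * Yr 1) * Yr 1 - D s (v * X1) w * Yr 1
  Dxyt : ∀ (s t : G), t ≠ 1 → ∀ (v : A1) (w : Ar G), D s (v * X1) (w * Yr t) =
      D s v (w * Yr t) * Xr + D s v (w * (Xr + Yr t)) * Yr t - D s (v * Y1) w * Yr t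
  Dyyt : ∀ (s t : G), t ≠ 1 → ∀ (v : A1) (w : Ar G), D s (v * Y1) (w * Yr t) =
      D s v (w * Yr t) * Yr 1 - D s v (w * (Xr + Yr t)) * Yr t + D s (v * Y1) w * Yr t
  /-- `⋄_1` as a product `A_1 × A_1 → A_1` -/
  D1 : A1 →ₗ[ℚ] A1 →ₗ[ℚ] A1
  D1_spec : ∀ u v : A1, jm (D1 u v) = D 1 u (jm v)


/-! ### Auxiliary material -/

section Aux

/-- Words of `A_1`. -/
noncomputable def wA (w : List LetA) : A1 := (w.map (ι ℚ)).prod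

/-- `g(x) = z_s^δ`, `g(y) = z - z_s^δ`. -/
noncomputable def gg (s : G) : LetA → Ar G
  | LetA.x => zdel s
  | LetA.y => zet - zdel s

/-- Letter swap `x ↔ y`. -/
def sigA : LetA → LetA
  | LetA.x => LetA.y
  | LetA.y => LetA.x

lemma tauR_mul (a b : Ar G) : tauR (a * b) = tauR b * tauR a := by
  simp [tauR, map_mul]

lemma tauR_Xr : tauR (Xr : Ar G) = Yr 1 := by
  simp [tauR, Xr, lift_ι_apply]

lemma zet_def : (zet : Ar G) = Xr + Yr 1 := rfl

lemma tauR_Yr1 : tauR (Yr 1 : Ar G) = Xr := by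
  simp [tauR, Yr, lift_ι_apply]

lemma tauR_Yrt {t : G} (h : t ≠ 1) : tauR (Yr t : Ar G) = -(Yr t) := by
  simp [tauR, Yr, lift_ι_apply, h]

lemma tauR_zet : tauR (zet : Ar G) = zet := by
  rw [zet_def, map_add, tauR_Xr, tauR_Yr1, add_comm]

lemma zdel_one : (zdel 1 : Ar G) = Xr := by simp [zdel]

lemma zdel_ne {s : G} (h : s ≠ 1) : (zdel s : Ar G) = Xr + Yr s := by
  simp [zdel, h]

lemma tauR_zdel (s : G) : tauR (zdel s : Ar G) = zet - zdel s := by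
  by_cases hs : s = 1
  · subst hs
    rw [zdel_one, tauR_Xr, zet_def]
    abel
  · rw [zdel_ne hs, map_add, tauR_Xr, tauR_Yrt hs, zet_def]
    abel

lemma tauR_gg (s : G) (l : LetA) : tauR (gg s l) = gg s (sigA l) := by
  cases l
  · simpa [gg, sigA] using tauR_zdel s
  · simp [gg, sigA, map_sub, tauR_zet, tauR_zdel]

lemma tauR_list_prod (L : List (Ar G)) :
    tauR L.prod = (L.reverse.map tauR).prod := by
  induction L with
  | nil => simp [tauR]
  | cons a L ih => simp [tauR_mul, ih]

lemma tau1_mul (a b : A1) : tau1 (a * b) = tau1 b * tau1 a := by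
  simp [tau1, map_mul]

lemma tau1_iota (l : LetA) : tau1 (ι ℚ l) = ι ℚ (sigA l) := by
  cases l <;> simp [tau1, sigA, lift_ι_apply, X1, Y1]

lemma tau1_list_prod (L : List A1) :
    tau1 L.prod = (L.reverse.map tau1).prod := by
  induction L with
  | nil => simp [tau1]
  | cons a L ih => simp [tau1_mul, ih]

lemma tau1_wA (w : List LetA) : tau1 (wA w) = wA (w.reverse.map sigA) := by
  simp [wA, tau1_list_prod, List.map_map, Function.comp_def, tau1_iota]

lemma phi_Xr : phi (Xr : Ar G) = zet := by simp [phi, Xr, lift_ι_apply]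

lemma phi_Yr (t : G) : phi (Yr t : Ar G) = zdel t - zet := by
  simp [phi, Yr, lift_ι_apply]

lemma jm_x : (jm (ι ℚ LetA.x) : Ar G) = Xr := by simp [jm, lift_ι_apply]

lemma jm_y : (jm (ι ℚ LetA.y) : Ar G) = Yr 1 := by simp [jm, lift_ι_apply]

lemma wordP_append (L₁ L₂ : List (ℕ × G)) :
    wordP (L₁ ++ L₂) = wordP L₁ * wordP L₂ := by
  simp [wordP]

lemma cumul_ones_append (g : G) (L : List (ℕ × G)) (h : ∀ p ∈ L, p.2 = 1)
    (a : ℕ) : cumul g (L ++ [(a, 1)]) = cumul g L ++ [(a, g)] := by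
  induction L generalizing g with
  | nil => simp [cumul]
  | cons p L ih =>
    have hp : p.2 = 1 := h p (by simp)
    have hL : ∀ q ∈ L, q.2 = 1 := fun q hq => h q (by simp [hq])
    simp only [List.cons_append, List.append_eq, cumul, hp, mul_one, ih g hL]

/-- The span of words with all subscripts `1`. -/
noncomputable def Pspan (G : Type) [CommGroup G] : Submodule ℚ (Ar G) :=
  Submodule.span ℚ {u : Ar G | ∃ (L : List (ℕ × G)) (a : ℕ),
    (∀ p ∈ L, p.2 = 1) ∧ u = wordP L * Xr ^ a}

lemma Pspan_mul_Xr {u : Ar G} (hu : u ∈ Pspan G) : u * Xr ∈ Pspan G := by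
  induction hu using Submodule.span_induction with
  | mem u hu =>
    obtain ⟨L, a, h, rfl⟩ := hu
    exact Submodule.subset_span ⟨L, a + 1, h, by rw [mul_assoc, pow_succ]⟩
  | zero => simp
  | add x y _ _ hx hy => rw [add_mul]; exact add_mem hx hy
  | smul c x _ hx => rw [smul_mul_assoc]; exact Submodule.smul_mem _ c hx

lemma Pspan_mul_Yr1 {u : Ar G} (hu : u ∈ Pspan G) : u * Yr 1 ∈ Pspan G := by
  induction hu using Submodule.span_induction with
  | mem u hu =>
    obtain ⟨L, a, h, rfl⟩ := hu
    refine Submodule.subset_span ⟨L ++ [(a, 1)], 0, ?_, ?_⟩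
    · intro p hp
      rcases List.mem_append.1 hp with hp | hp
      · exact h p hp
      · simp at hp; simp [hp]
    · simp [wordP_append, wordP, mul_assoc]
  | zero => simp
  | add x y _ _ hx hy => rw [add_mul]; exact add_mem hx hy
  | smul c x _ hx => rw [smul_mul_assoc]; exact Submodule.smul_mem _ c hx

variable (S : DiamondSetup G)

lemma psi_one (s : G) : S.psi s 1 = 1 := by
  have := S.psi_spec s [] 0
  simpa [wordP, cumul] using this

lemma psi_mul_Xr (s : G) {u : Ar G} (hu : u ∈ Pspan G) :
    S.psi s (u * Xr) = S.psi s u * zet := by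
  induction hu using Submodule.span_induction with
  | mem u hu =>
    obtain ⟨L, a, h, rfl⟩ := hu
    rw [mul_assoc, ← pow_succ, S.psi_spec s L (a + 1), S.psi_spec s L a,
      pow_succ, ← mul_assoc, map_mul, phi_Xr]
  | zero => simp
  | add x y _ _ hx hy => rw [add_mul, map_add, map_add, hx, hy, add_mul]
  | smul c x _ hx =>
    rw [smul_mul_assoc, map_smul, map_smul, hx, smul_mul_assoc]

lemma psi_mul_Yr1 (s : G) {u : Ar G} (hu : u ∈ Pspan G) :
    S.psi s (u * Yr 1) = S.psi s u * (zdel s - zet) := by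
  induction hu using Submodule.span_induction with
  | mem u hu =>
    obtain ⟨L, a, h, rfl⟩ := hu
    have e : wordP L * Xr ^ a * Yr 1 = wordP (L ++ [(a, 1)]) * Xr ^ (0 : ℕ) := by
      simp [wordP_append, wordP, mul_assoc]
    rw [e, S.psi_spec s (L ++ [(a, 1)]) 0, cumul_ones_append s L h a,
      S.psi_spec s L a, wordP_append]
    simp [wordP, map_mul, phi_Yr, mul_assoc]
  | zero => simp
  | add x y _ _ hx hy => rw [add_mul, map_add, map_add, hx, hy, add_mul]
  | smul c x _ hx =>
    rw [smul_mul_assoc, map_smul, map_smul, hx, smul_mul_assoc]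

lemma keyF (s : G) (w : List LetA) :
    phi (jm (wA w)) ∈ Pspan G ∧
      S.psi s (phi (jm (wA w))) = (w.map (gg s)).prod := by
  induction w using List.reverseRecOn with
  | nil =>
    refine ⟨?_, ?_⟩
    · have h1 : (1 : Ar G) ∈ Pspan G :=
        Submodule.subset_span ⟨[], 0, by simp, by simp [wordP]⟩
      simpa [wA] using h1
    · simp [wA, psi_one]
  | append_singleton w l ih =>
    obtain ⟨hm, he⟩ := ih
    have hw : wA (w ++ [l]) = wA w * ι ℚ l := by simp [wA]
    cases l with
    | x =>
      have hphi : (phi (jm (wA (w ++ [LetA.x]))) : Ar G) =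
          phi (jm (wA w)) * Xr + phi (jm (wA w)) * Yr 1 := by
        rw [hw, map_mul, map_mul, jm_x, phi_Xr, zet_def, mul_add]
      refine ⟨?_, ?_⟩
      · rw [hphi]; exact add_mem (Pspan_mul_Xr hm) (Pspan_mul_Yr1 hm)
      · rw [hphi, map_add, psi_mul_Xr S s hm, psi_mul_Yr1 S s hm, he]
        simp [gg, mul_add, mul_sub]
    | y =>
      have hphi : (phi (jm (wA (w ++ [LetA.y]))) : Ar G) =
          phi (jm (wA w)) * (zdel 1 - zet) := by
        rw [hw, map_mul, map_mul, jm_y, phi_Yr]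
      have hz : (zdel 1 : Ar G) - zet = -(Yr 1) := by
        simp [zdel, zet]
      refine ⟨?_, ?_⟩
      · rw [hphi, hz, mul_neg]; exact neg_mem (Pspan_mul_Yr1 hm)
      · rw [hphi, hz, mul_neg, map_neg, psi_mul_Yr1 S s hm, he]
        simp [gg, mul_sub]

lemma main_word (s : G) (w : List LetA) :
    tauR (S.D s (wA w) 1) = S.D s (tau1 (wA w)) 1 := by
  rw [S.D_one s (wA w), S.D_one s (tau1 (wA w)), (keyF S s w).2, tau1_wA,
    (keyF S s (w.reverse.map sigA)).2, tauR_list_prod]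
  simp [List.map_map, Function.comp_def, tauR_gg]

lemma span_wA_top : Submodule.span ℚ (Set.range wA) = ⊤ := by
  rw [eq_top_iff]
  rintro v -
  induction v using FreeAlgebra.induction with
  | grade0 r =>
    have : (algebraMap ℚ A1) r = r • wA [] := by
      simp [wA, Algebra.algebraMap_eq_smul_one]
    rw [this]
    exact Submodule.smul_mem _ r (Submodule.subset_span ⟨[], rfl⟩)
  | grade1 l =>
    exact Submodule.subset_span ⟨[l], by simp [wA]⟩
  | mul a b ha hb =>
    have h := Submodule.mul_mem_mul ha hb
    rw [Submodule.span_mul_span] at h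
    refine Submodule.span_le.2 ?_ h
    rintro z ⟨x, ⟨w1, rfl⟩, y, ⟨w2, rfl⟩, rfl⟩
    exact Submodule.subset_span ⟨w1 ++ w2, by simp [wA]⟩
  | add a b ha hb => exact add_mem ha hb

end Aux

/-- For all `s ∈ μ_r` and `v ∈ A_1`: `τ(v ⋄_s 1) = τ(v) ⋄_s 1`. -/
theorem statement15 {G : Type} [CommGroup G] (S : DiamondSetup G)
    (s : G) (v : A1) :
    tauR (S.D s v 1) = S.D s (tau1 v) 1 := by
  have hv : v ∈ Submodule.span ℚ (Set.range wA) := by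
    rw [span_wA_top]; trivial
  induction hv using Submodule.span_induction with
  | mem u hu => obtain ⟨w, rfl⟩ := hu; exact main_word S s w
  | zero => simp
  | add x y _ _ hx hy => simp [map_add, hx, hy]
  | smul c x _ hx => simp [map_smul, hx]
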